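/- Let X be a nonempty set, Θ ⊆ ℝ a nondegenerate open interval, and ψ : X × Θ → ℝ a T₁-function with ϑ₁ : X → Θ. If for each x ∈ X the function t ↦ ψ(x,t) is decreasing on Θ, then for each x, y ∈ X with ϑ₁(x) < ϑ₁(y), the function (ϑ₁(x), ϑ₁(y)) ∋ t ↦ −ψ(x,t)/ψ(y,t) is increasing; if each t ↦ ψ(x,t) is strictly decreasing, then this quotient function is strictly increasing. -/

import Mathlib

open Set

theorem stmt12 (X : Type*) [Nonempty X]
    (Θ : Set ℝ) (hopen : IsOpen Θ) (hconn : Θ.OrdConnected) (hnt : Θ.Nontrivial)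
    (ψ : X → ℝ → ℝ) (ϑ1 : X → ℝ) (hmap : ∀ x, ϑ1 x ∈ Θ)
    (hT1 : ∀ x, (∀ t ∈ Θ, t < ϑ1 x → 0 < ψ x t) ∧ (∀ t ∈ Θ, ϑ1 x < t → ψ x t < 0)) :
    ((∀ x, AntitoneOn (ψ x) Θ) → ∀ x y : X, ϑ1 x < ϑ1 y →
      MonotoneOn (fun t => -ψ x t / ψ y t) (Set.Ioo (ϑ1 x) (ϑ1 y))) ∧
    ((∀ x, StrictAntiOn (ψ x) Θ) → ∀ x y : X, ϑ1 x < ϑ1 y →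
      StrictMonoOn (fun t => -ψ x t / ψ y t) (Set.Ioo (ϑ1 x) (ϑ1 y))) := by
  have hsub : ∀ x y : X, Set.Ioo (ϑ1 x) (ϑ1 y) ⊆ Θ := fun x y =>
    fun t ht => hconn.out (hmap x) (hmap y) ⟨le_of_lt ht.1, le_of_lt ht.2⟩
  constructor
  · intro hanti x y _ s hs t ht hst
    have hsΘ := hsub x y hs
    have htΘ := hsub x y ht
    have hxs : ψ x s < 0 := (hT1 x).2 s hsΘ hs.1
    have hxt : ψ x t < 0 := (hT1 x).2 t htΘ ht.1
    have hys : 0 < ψ y s := (hT1 y).1 s hsΘ hs.2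
    have hyt : 0 < ψ y t := (hT1 y).1 t htΘ ht.2
    have h1 : -ψ x s ≤ -ψ x t := neg_le_neg (hanti x hsΘ htΘ hst)
    have h2 : ψ y t ≤ ψ y s := hanti y hsΘ htΘ hst
    exact div_le_div₀ (by linarith) h1 hyt h2
  · intro hanti x y _ s hs t ht hst
    have hsΘ := hsub x y hs
    have htΘ := hsub x y ht
    have hxs : ψ x s < 0 := (hT1 x).2 s hsΘ hs.1
    have hxt : ψ x t < 0 := (hT1 x).2 t htΘ ht.1
    have hys : 0 < ψ y s := (hT1 y).1 s hsΘ hs.2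
    have hyt : 0 < ψ y t := (hT1 y).1 t htΘ ht.2
    have h1 : -ψ x s < -ψ x t := neg_lt_neg (hanti x hsΘ htΘ hst)
    have h2 : ψ y t < ψ y s := hanti y hsΘ htΘ hst
    exact div_lt_div₀ h1 (le_of_lt h2) (by linarith) hyt
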